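/- Let t_c > 0 be fixed. Define D(L_a, L_b | t_c) = inf over P with P^T P = I of ||P e^{t_c L_a} − e^{t_c L_b} P||_F for real symmetric matrices L_a, L_b. Then D(L₁, L₃ | t_c) ≤ D(L₁, L₂ | t_c) + D(L₂, L₃ | t_c). -/

import Mathlib

open Matrix NormedSpace

/-- Frobenius norm of a real matrix. -/
noncomputable def frob {a b : ℕ} (A : Matrix (Fin a) (Fin b) ℝ) : ℝ :=
  Real.sqrt (Matrix.trace (Aᵀ * A))

/-- The α = 1 exponential graph diffusion distance at fixed time `t`. -/
noncomputable def expDist (t : ℝ) {a b : ℕ} (La : Matrix (Fin a) (Fin a) ℝ)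
    (Lb : Matrix (Fin b) (Fin b) ℝ) : ℝ :=
  sInf {x : ℝ | ∃ P : Matrix (Fin b) (Fin a) ℝ, Pᵀ * P = 1 ∧
    x = frob (P * exp (t • La) - exp (t • Lb) * P)}

lemma trace_tm_nonneg {a b : ℕ} (A : Matrix (Fin a) (Fin b) ℝ) :
    0 ≤ Matrix.trace (Aᵀ * A) := by
  rw [Matrix.trace]
  refine Finset.sum_nonneg fun j _ => ?_
  simp only [Matrix.diag, Matrix.mul_apply, Matrix.transpose_apply]
  exact Finset.sum_nonneg fun i _ => mul_self_nonneg _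

lemma frob_nonneg {a b : ℕ} (A : Matrix (Fin a) (Fin b) ℝ) : 0 ≤ frob A :=
  Real.sqrt_nonneg _

section FrobNorm

attribute [local instance] Matrix.frobeniusSeminormedAddCommGroup

lemma frob_eq_norm {a b : ℕ} (A : Matrix (Fin a) (Fin b) ℝ) : frob A = ‖A‖ := by
  rw [frob, Matrix.frobenius_norm_def, Real.sqrt_eq_rpow]
  congr 1
  rw [Matrix.trace, Finset.sum_comm]
  simp [Matrix.diag, Matrix.mul_apply, Matrix.transpose_apply, Real.norm_eq_abs,
    Real.rpow_natCast, ← sq, sq_abs]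

lemma frob_add_le {a b : ℕ} (A B : Matrix (Fin a) (Fin b) ℝ) :
    frob (A + B) ≤ frob A + frob B := by
  rw [frob_eq_norm, frob_eq_norm, frob_eq_norm]
  exact norm_add_le _ _

end FrobNorm

lemma frob_mul_left {a b c : ℕ} (Q : Matrix (Fin c) (Fin b) ℝ) (hQ : Qᵀ * Q = 1)
    (A : Matrix (Fin b) (Fin a) ℝ) : frob (Q * A) = frob A := by
  rw [frob, frob, Matrix.transpose_mul]
  congr 2
  rw [Matrix.mul_assoc, ← Matrix.mul_assoc Qᵀ Q A, hQ, Matrix.one_mul]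

lemma frob_mul_right_le {a b c : ℕ} (P : Matrix (Fin b) (Fin a) ℝ) (hP : Pᵀ * P = 1)
    (A : Matrix (Fin c) (Fin b) ℝ) : frob (A * P) ≤ frob A := by
  rw [frob, frob]
  apply Real.sqrt_le_sqrt
  have hS : (1 - P * Pᵀ) * (1 - P * Pᵀ) = 1 - P * Pᵀ := by
    rw [sub_mul, mul_sub, mul_sub, Matrix.one_mul, Matrix.mul_one, Matrix.one_mul]
    rw [Matrix.mul_assoc P Pᵀ (P * Pᵀ), ← Matrix.mul_assoc Pᵀ P Pᵀ, hP, Matrix.one_mul]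
    abel
  have e2 : ((A * P)ᵀ * (A * P)).trace = ((Aᵀ * A) * (P * Pᵀ)).trace := by
    rw [Matrix.transpose_mul, Matrix.mul_assoc Pᵀ Aᵀ (A * P), Matrix.trace_mul_comm]
    rw [Matrix.mul_assoc, Matrix.mul_assoc, Matrix.mul_assoc]
  have e3 : ((A * (1 - P * Pᵀ))ᵀ * (A * (1 - P * Pᵀ)))
      = (1 - P * Pᵀ) * ((Aᵀ * A) * (1 - P * Pᵀ)) := by
    rw [Matrix.transpose_mul, Matrix.transpose_sub, Matrix.transpose_one, Matrix.transpose_mul,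
      Matrix.transpose_transpose]
    rw [Matrix.mul_assoc (1 - P * Pᵀ) Aᵀ (A * (1 - P * Pᵀ)), ← Matrix.mul_assoc Aᵀ A (1 - P * Pᵀ)]
  have e4 : ((A * (1 - P * Pᵀ))ᵀ * (A * (1 - P * Pᵀ))).trace
      = (Aᵀ * A).trace - ((Aᵀ * A) * (P * Pᵀ)).trace := by
    rw [e3, Matrix.trace_mul_comm, Matrix.mul_assoc, hS, Matrix.mul_sub, Matrix.mul_one,
      Matrix.trace_sub]
  have h0 := trace_tm_nonneg (A * (1 - P * Pᵀ))
  rw [e4] at h0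
  rw [e2]
  linarith

/-- The canonical inclusion isometry. -/
def inclP (a b : ℕ) (h : a ≤ b) : Matrix (Fin b) (Fin a) ℝ :=
  Matrix.of fun i j => if i = Fin.castLE h j then 1 else 0

lemma inclP_orth (a b : ℕ) (h : a ≤ b) : (inclP a b h)ᵀ * inclP a b h = 1 := by
  ext j k
  simp only [Matrix.mul_apply, Matrix.transpose_apply, inclP, Matrix.of_apply]
  rw [Finset.sum_eq_single (Fin.castLE h j)]
  · simp [Matrix.one_apply, Fin.castLE_inj, eq_comm]
  · intro i _ hi; simp [hi]
  · simp

theorem expDist_triangle {n₁ n₂ n₃ : ℕ} (h12 : n₁ ≤ n₂) (h23 : n₂ ≤ n₃)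
    (t : ℝ) (ht : 0 < t)
    (L₁ : Matrix (Fin n₁) (Fin n₁) ℝ) (L₂ : Matrix (Fin n₂) (Fin n₂) ℝ)
    (L₃ : Matrix (Fin n₃) (Fin n₃) ℝ)
    (h₁ : L₁.IsSymm) (h₂ : L₂.IsSymm) (h₃ : L₃.IsSymm) :
    expDist t L₁ L₃ ≤ expDist t L₁ L₂ + expDist t L₂ L₃ := by
  set E₁ := exp (t • L₁) with hE₁
  set E₂ := exp (t • L₂) with hE₂
  set E₃ := exp (t • L₃) with hE₃
  set S12 := {x : ℝ | ∃ P : Matrix (Fin n₂) (Fin n₁) ℝ, Pᵀ * P = 1 ∧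
    x = frob (P * E₁ - E₂ * P)} with hS12
  set S23 := {x : ℝ | ∃ P : Matrix (Fin n₃) (Fin n₂) ℝ, Pᵀ * P = 1 ∧
    x = frob (P * E₂ - E₃ * P)} with hS23
  set S13 := {x : ℝ | ∃ P : Matrix (Fin n₃) (Fin n₁) ℝ, Pᵀ * P = 1 ∧
    x = frob (P * E₁ - E₃ * P)} with hS13
  have hd12 : expDist t L₁ L₂ = sInf S12 := rfl
  have hd23 : expDist t L₂ L₃ = sInf S23 := rfl
  have hd13 : expDist t L₁ L₃ = sInf S13 := rfl
  have hne12 : S12.Nonempty :=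
    ⟨_, inclP n₁ n₂ h12, inclP_orth n₁ n₂ h12, rfl⟩
  have hne23 : S23.Nonempty :=
    ⟨_, inclP n₂ n₃ h23, inclP_orth n₂ n₃ h23, rfl⟩
  have hbdd13 : BddBelow S13 := by
    refine ⟨0, fun x hx => ?_⟩
    obtain ⟨P, _, rfl⟩ := hx
    exact frob_nonneg _
  -- main step: for all x ∈ S12, y ∈ S23, sInf S13 ≤ x + y
  have key : ∀ x ∈ S12, ∀ y ∈ S23, sInf S13 ≤ x + y := by
    rintro x ⟨P, hP, rfl⟩ y ⟨Q, hQ, rfl⟩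
    have hR : (Q * P)ᵀ * (Q * P) = 1 := by
      rw [Matrix.transpose_mul, Matrix.mul_assoc, ← Matrix.mul_assoc Qᵀ Q P, hQ,
        Matrix.one_mul, hP]
    have hmem : frob ((Q * P) * E₁ - E₃ * (Q * P)) ∈ S13 := ⟨Q * P, hR, rfl⟩
    have hle := csInf_le hbdd13 hmem
    have hdecomp : (Q * P) * E₁ - E₃ * (Q * P)
        = Q * (P * E₁ - E₂ * P) + (Q * E₂ - E₃ * Q) * P := by
      rw [Matrix.mul_sub, Matrix.sub_mul, Matrix.mul_assoc, Matrix.mul_assoc,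
        ← Matrix.mul_assoc Q E₂ P, Matrix.mul_assoc E₃ Q P]
      abel
    have h1 : frob ((Q * P) * E₁ - E₃ * (Q * P))
        ≤ frob (Q * (P * E₁ - E₂ * P)) + frob ((Q * E₂ - E₃ * Q) * P) := by
      rw [hdecomp]; exact frob_add_le _ _
    have h2 : frob (Q * (P * E₁ - E₂ * P)) = frob (P * E₁ - E₂ * P) :=
      frob_mul_left Q hQ _
    have h3 : frob ((Q * E₂ - E₃ * Q) * P) ≤ frob (Q * E₂ - E₃ * Q) :=
      frob_mul_right_le P hP _
    linarith
  rw [hd12, hd23, hd13]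
  have step : sInf S13 - sInf S23 ≤ sInf S12 := by
    apply le_csInf hne12
    intro x hx
    have : sInf S13 - x ≤ sInf S23 := by
      apply le_csInf hne23
      intro y hy
      linarith [key x hx y hy]
    linarith
  linarith
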